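/- Let τ₁ be the unique positive solution of τ tanh τ = 1 and λ(τ) = 2τ²/cosh²(τ). Then λ'(τ) > 0 for 0 < τ < τ₁, λ'(τ₁) = 0, λ'(τ) < 0 for τ > τ₁, and λ(τ) → 0 as τ → ∞. -/

import Mathlib

open Real Set Filter

private lemma tanh_strict {a b : ℝ} (hab : a < b) : Real.tanh a < Real.tanh b := by
  rw [Real.tanh_eq_sinh_div_cosh, Real.tanh_eq_sinh_div_cosh,
    div_lt_div_iff₀ (Real.cosh_pos a) (Real.cosh_pos b), ← sub_pos]
  have : 0 < Real.sinh (b - a) := Real.sinh_pos_iff.mpr (by linarith)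
  rw [Real.sinh_sub] at this
  linarith

private lemma g_strict {a b : ℝ} (ha : 0 < a) (hab : a < b) :
    a * Real.tanh a < b * Real.tanh b := by
  have h1 : 0 < Real.tanh a := by
    simpa using tanh_strict ha
  have h2 := tanh_strict hab
  nlinarith

private lemma lam_hasDeriv (τ : ℝ) :
    HasDerivAt (fun τ => 2 * τ ^ 2 / Real.cosh τ ^ 2)
      (4 * τ * (1 - τ * Real.tanh τ) / Real.cosh τ ^ 2) τ := by
  have hc : Real.cosh τ ≠ 0 := (Real.cosh_pos τ).ne'
  have h1 : HasDerivAt (fun τ : ℝ => 2 * τ ^ 2) (4 * τ) τ := by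
    have := (hasDerivAt_pow 2 τ).const_mul (2 : ℝ)
    refine this.congr_deriv ?_; push_cast; ring
  have h2 : HasDerivAt (fun τ => Real.cosh τ ^ 2) (2 * Real.cosh τ * Real.sinh τ) τ := by
    have := (Real.hasDerivAt_cosh τ).pow 2
    refine this.congr_deriv ?_; push_cast; ring
  have := h1.div h2 (pow_ne_zero 2 hc)
  refine this.congr_deriv ?_
  rw [Real.tanh_eq_sinh_div_cosh]
  field_simp
  ring

theorem lambda_monotonicity (τ₁ : ℝ) (hτ₁ : 0 < τ₁) (h1 : τ₁ * Real.tanh τ₁ = 1)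
    (lam : ℝ → ℝ) (hlam : ∀ τ, lam τ = 2 * τ ^ 2 / Real.cosh τ ^ 2) :
    (∀ τ : ℝ, 0 < τ → τ < τ₁ → 0 < deriv lam τ) ∧
    deriv lam τ₁ = 0 ∧
    (∀ τ : ℝ, τ₁ < τ → deriv lam τ < 0) ∧
    Filter.Tendsto lam Filter.atTop (nhds 0) := by
  have hlam' : lam = fun τ => 2 * τ ^ 2 / Real.cosh τ ^ 2 := funext hlam
  subst hlam'
  have hd : ∀ τ : ℝ, deriv (fun τ => 2 * τ ^ 2 / Real.cosh τ ^ 2) τ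
      = 4 * τ * (1 - τ * Real.tanh τ) / Real.cosh τ ^ 2 := fun τ =>
    (lam_hasDeriv τ).deriv
  refine ⟨?_, ?_, ?_, ?_⟩
  · intro τ hτ hττ
    rw [hd]
    have hg : τ * Real.tanh τ < 1 := h1 ▸ g_strict hτ hττ
    have hc := Real.cosh_pos τ
    apply div_pos
    · nlinarith
    · positivity
  · rw [hd, h1]; simp
  · intro τ hττ
    rw [hd]
    have hg : 1 < τ * Real.tanh τ := h1 ▸ g_strict hτ₁ hττ
    have hc := Real.cosh_pos τ
    have hτ : 0 < τ := hτ₁.trans hττ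
    apply div_neg_of_neg_of_pos
    · nlinarith
    · positivity
  · apply squeeze_zero' (g := fun τ => 2 * ((2 * τ) ^ 2 * Real.exp (-(2 * τ))))
    · filter_upwards with τ
      positivity
    · filter_upwards [eventually_ge_atTop (0 : ℝ)] with τ hτ
      have hc : Real.exp τ / 2 ≤ Real.cosh τ := by
        rw [Real.cosh_eq]
        have := (Real.exp_pos (-τ)).le
        linarith
      have hc2 : (Real.exp τ / 2) ^ 2 ≤ Real.cosh τ ^ 2 := by
        apply pow_le_pow_left₀ (by positivity) hc
      have hcp : (0:ℝ) < (Real.exp τ / 2) ^ 2 := by positivity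
      calc 2 * τ ^ 2 / Real.cosh τ ^ 2 ≤ 2 * τ ^ 2 / (Real.exp τ / 2) ^ 2 := by
            apply div_le_div_of_nonneg_left (by positivity) hcp hc2
        _ = 2 * ((2 * τ) ^ 2 * Real.exp (-(2 * τ))) := by
            have hsq : Real.exp (2 * τ) = Real.exp τ ^ 2 := by
              rw [two_mul, Real.exp_add]; ring
            rw [Real.exp_neg, hsq]
            field_simp
    · have h0 : Tendsto (fun x : ℝ => x ^ 2 * Real.exp (-x)) atTop (nhds 0) :=
        tendsto_pow_mul_exp_neg_atTop_nhds_zero 2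
      have h2 : Tendsto (fun τ : ℝ => 2 * τ) atTop atTop :=
        Filter.tendsto_id.const_mul_atTop two_pos
      have := (h0.comp h2).const_mul 2
      simpa using this
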